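/- For every real α > 2 and every β > 0, ∫_{ℝ²} (1 − (1/(1 + β·‖x‖^{−α}))²) dx = 2c₂·β^{2/α}, where c₂ = π²·(α + 2)/(α²·sin(2π/α)). -/

import Mathlib

open MeasureTheory Real Set

lemma real_beta (u v : ℝ) (hu : 0 < u) (hv : 0 < v) :
    ∫ x in Ioo (0:ℝ) 1, x ^ (u - 1) * (1 - x) ^ (v - 1) =
      Real.Gamma u * Real.Gamma v / Real.Gamma (u + v) := by
  have h := Complex.Gamma_mul_Gamma_eq_betaIntegral (s := (u:ℂ)) (t := (v:ℂ))
    (by simpa using hu) (by simpa using hv)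
  have hbeta : Complex.betaIntegral u v =
      ((∫ x in Ioo (0:ℝ) 1, x ^ (u - 1) * (1 - x) ^ (v - 1) : ℝ) : ℂ) := by
    rw [Complex.betaIntegral, intervalIntegral.integral_of_le zero_le_one,
      integral_Ioc_eq_integral_Ioo]
    rw [show ((∫ x in Ioo (0:ℝ) 1, x ^ (u - 1) * (1 - x) ^ (v - 1) : ℝ) : ℂ) =
      ∫ x in Ioo (0:ℝ) 1, ((x ^ (u - 1) * (1 - x) ^ (v - 1) : ℝ) : ℂ) from
      (integral_ofReal).symm]
    refine setIntegral_congr_fun measurableSet_Ioo fun x hx => ?_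
    have hx0 : (0:ℝ) ≤ x := hx.1.le
    have hx1 : (0:ℝ) ≤ 1 - x := by linarith [hx.2]
    push_cast [Complex.ofReal_cpow hx0, Complex.ofReal_cpow hx1]
    ring
  have hG : Real.Gamma (u + v) ≠ 0 := (Real.Gamma_pos_of_pos (by positivity)).ne'
  have h2 : ((Real.Gamma u * Real.Gamma v : ℝ) : ℂ) =
      ((Real.Gamma (u+v) : ℝ) : ℂ) * ((∫ x in Ioo (0:ℝ) 1, x ^ (u - 1) * (1 - x) ^ (v - 1) : ℝ) : ℂ) := by
    rw [← hbeta]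
    push_cast [← Complex.Gamma_ofReal]
    simpa using h
  have h3 : Real.Gamma u * Real.Gamma v =
      Real.Gamma (u+v) * ∫ x in Ioo (0:ℝ) 1, x ^ (u - 1) * (1 - x) ^ (v - 1) := by
    exact_mod_cast h2
  field_simp
  linarith [h3]

-- setup for the change of variables t ↦ t/(1+t) from Ioi 0 to Ioo 0 1
lemma cov_deriv : ∀ t ∈ Ioi (0:ℝ),
    HasDerivWithinAt (fun t : ℝ => t / (1 + t)) (((1 + t) ^ 2)⁻¹) (Ioi 0) t := by
  intro t ht
  have h1 : (0:ℝ) < 1 + t := by have := ht.out; linarith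
  have : HasDerivAt (fun t : ℝ => t / (1 + t))
      ((1 * (1 + t) - t * (0 + 1)) / (1 + t) ^ 2) t :=
    (hasDerivAt_id t).div ((hasDerivAt_const t 1).add (hasDerivAt_id t)) h1.ne'
  convert this.hasDerivWithinAt using 1
  exacts [rfl, rfl, by ring]

lemma cov_inj : InjOn (fun t : ℝ => t / (1 + t)) (Ioi 0) := by
  intro a ha b hb hab
  have h1 : (0:ℝ) < 1 + a := by have := ha.out; linarith
  have h2 : (0:ℝ) < 1 + b := by have := hb.out; linarith
  field_simp at hab
  linarith

lemma cov_image : (fun t : ℝ => t / (1 + t)) '' (Ioi 0) = Ioo 0 1 := by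
  ext y
  constructor
  · rintro ⟨t, ht, rfl⟩
    have ht' : (0:ℝ) < t := ht
    have h1 : (0:ℝ) < 1 + t := by linarith
    constructor
    · positivity
    · rw [div_lt_one h1]; linarith
  · rintro ⟨hy0, hy1⟩
    refine ⟨y / (1 - y), ?_, ?_⟩
    · have : (0:ℝ) < 1 - y := by linarith
      exact div_pos hy0 this
    · have h1 : (0:ℝ) < 1 - y := by linarith
      field_simp
      ring

lemma cov_integrand (u v t : ℝ) (ht : 0 < t) :
    |((1 + t) ^ 2)⁻¹| • ((t / (1 + t)) ^ (u - 1) * (1 - t / (1 + t)) ^ (v - 1)) =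
      t ^ (u - 1) * (1 + t) ^ (-(u + v)) := by
  have hs : (0:ℝ) < 1 + t := by linarith
  have h1 : (1 : ℝ) - t / (1 + t) = (1 + t)⁻¹ := by field_simp; ring
  have habs : |((1 + t) ^ 2)⁻¹| = ((1 + t) ^ 2)⁻¹ := abs_of_pos (by positivity)
  have key : (1 + t) ^ (-(u + v)) =
      ((1 + t) ^ (2:ℕ))⁻¹ * (((1 + t) ^ (u - 1))⁻¹ * ((1 + t) ^ (v - 1))⁻¹) := by
    rw [← Real.rpow_natCast (1 + t) 2, ← Real.rpow_neg hs.le, ← Real.rpow_neg hs.le,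
      ← Real.rpow_neg hs.le, ← Real.rpow_add hs, ← Real.rpow_add hs]
    norm_num
    ring_nf
  rw [smul_eq_mul, habs, h1, Real.div_rpow ht.le hs.le, Real.inv_rpow hs.le, key]
  field_simp

lemma beta_Ioi (u v : ℝ) (hu : 0 < u) (hv : 0 < v) :
    ∫ t in Ioi (0:ℝ), t ^ (u - 1) * (1 + t) ^ (-(u + v)) =
      Real.Gamma u * Real.Gamma v / Real.Gamma (u + v) := by
  have h := integral_image_eq_integral_abs_deriv_smul measurableSet_Ioi cov_deriv cov_inj
    (fun x : ℝ => x ^ (u - 1) * (1 - x) ^ (v - 1))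
  rw [cov_image] at h
  rw [← real_beta u v hu hv, h]
  exact setIntegral_congr_fun measurableSet_Ioi fun t ht => (cov_integrand u v t ht).symm

lemma beta_integrableOn (u v : ℝ) (hu : 0 < u) (hv : 0 < v) :
    IntegrableOn (fun t : ℝ => t ^ (u - 1) * (1 + t) ^ (-(u + v))) (Ioi (0:ℝ)) := by
  have hc := Complex.betaIntegral_convergent (u := (u:ℂ)) (v := (v:ℂ))
    (by simpa using hu) (by simpa using hv)
  rw [intervalIntegrable_iff_integrableOn_Ioo_of_le zero_le_one] at hc
  have hre : IntegrableOn (fun x : ℝ =>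
      ((x:ℂ) ^ ((u:ℂ) - 1) * (1 - (x:ℂ)) ^ ((v:ℂ) - 1)).re) (Ioo 0 1) := hc.re
  have hg : IntegrableOn (fun x : ℝ => x ^ (u - 1) * (1 - x) ^ (v - 1)) (Ioo (0:ℝ) 1) := by
    refine hre.congr_fun (fun x hx => ?_) measurableSet_Ioo
    have hx0 : (0:ℝ) ≤ x := hx.1.le
    have hx1 : (0:ℝ) ≤ 1 - x := by linarith [hx.2]
    have : (x:ℂ) ^ ((u:ℂ) - 1) * (1 - (x:ℂ)) ^ ((v:ℂ) - 1) =
        ((x ^ (u - 1) * (1 - x) ^ (v - 1) : ℝ) : ℂ) := by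
      push_cast [Complex.ofReal_cpow hx0, Complex.ofReal_cpow hx1]
      ring
    beta_reduce
    rw [this, Complex.ofReal_re]
  rw [← cov_image,
    integrableOn_image_iff_integrableOn_abs_deriv_smul measurableSet_Ioi cov_deriv cov_inj] at hg
  exact hg.congr_fun (fun t ht => cov_integrand u v t ht) measurableSet_Ioi

lemma key1 (a : ℝ) (ha0 : 0 < a) (ha1 : a < 1) :
    ∫ t in Ioi (0:ℝ), (2 * (t ^ ((a + 1) - 1) * (1 + t) ^ (-((a + 1) + (1 - a)))) +
        t ^ (a - 1) * (1 + t) ^ (-(a + (2 - a)))) = (1 + a) * π / Real.sin (π * a) := by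
  have hI1 := beta_integrableOn (a + 1) (1 - a) (by linarith) (by linarith)
  have hI2 := beta_integrableOn a (2 - a) ha0 (by linarith)
  rw [integral_add (hI1.const_mul 2) hI2, MeasureTheory.integral_const_mul,
    beta_Ioi _ _ (by linarith : (0:ℝ) < a + 1) (by linarith : (0:ℝ) < 1 - a),
    beta_Ioi _ _ ha0 (by linarith : (0:ℝ) < 2 - a),
    show (a + 1) + (1 - a) = 2 by ring, show a + (2 - a) = 2 by ring, Real.Gamma_two]
  rw [Real.Gamma_add_one ha0.ne',
    show (2:ℝ) - a = (1 - a) + 1 by ring,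
    Real.Gamma_add_one (by linarith : (1:ℝ) - a ≠ 0),
    div_one, div_one]
  linear_combination (1 + a) * Real.Gamma_mul_Gamma_one_sub a

/-- For `α > 2` and `β > 0`,
`∫_{ℝ²} (1 − (1/(1 + β‖x‖^{−α}))²) dx = 2c₂ β^{2/α}` with
`c₂ = π²(α+2)/(α² sin(2π/α))`. -/
theorem planar_integral_two (α β : ℝ) (hα : 2 < α) (hβ : 0 < β) :
    ∫ x : EuclideanSpace ℝ (Fin 2), (1 - (1 / (1 + β * ‖x‖ ^ (-α))) ^ 2) =
      2 * (π ^ 2 * (α + 2) / (α ^ 2 * Real.sin (2 * π / α))) * β ^ (2 / α) := by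
  have hα0 : (0:ℝ) < α := by linarith
  set a : ℝ := 2 / α with ha_def
  have ha0 : 0 < a := by positivity
  have ha1 : a < 1 := by rw [ha_def, div_lt_one hα0]; linarith
  set f : ℝ → ℝ := fun r => 1 - (1 / (1 + β * r ^ (-α))) ^ 2 with hf_def
  set G : ℝ → ℝ := fun y => y * (2 * β * y ^ α + β ^ 2) / (y ^ α + β) ^ 2 with hG_def
  set H : ℝ → ℝ := fun x => x * (2 * x ^ α + 1) / (x ^ α + 1) ^ 2 with hH_def
  set c : ℝ := β ^ (1 / α) with hc_def
  have hc0 : 0 < c := rpow_pos_of_pos hβ _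
  -- Step 0 : polar coordinates
  have step0 : ∫ x : EuclideanSpace ℝ (Fin 2), f ‖x‖ =
      2 * (π * ∫ y in Ioi (0:ℝ), y * f y) := by
    rw [integral_fun_norm_addHaar (volume : Measure (EuclideanSpace ℝ (Fin 2))) f]
    have hdim : Module.finrank ℝ (EuclideanSpace ℝ (Fin 2)) = 2 := by
      simp [finrank_euclideanSpace]
    rw [hdim]
    have hball : (volume (Metric.ball (0 : EuclideanSpace ℝ (Fin 2)) 1)).toReal = π := by
      rw [EuclideanSpace.volume_ball]
      simp [Real.sq_sqrt Real.pi_pos.le]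
      rw [show (1:ℝ) + 1 = 2 by norm_num, Real.Gamma_two, div_one,
        ENNReal.toReal_ofReal Real.pi_pos.le]
    rw [measureReal_def, hball]
    norm_num
  -- Step 1 : rewrite integrand on Ioi 0
  have step1 : ∫ y in Ioi (0:ℝ), y * f y = ∫ y in Ioi (0:ℝ), G y := by
    refine setIntegral_congr_fun measurableSet_Ioi fun y hy => ?_
    have hy0 : (0:ℝ) < y := hy
    have hya : (0:ℝ) < y ^ α := rpow_pos_of_pos hy0 α
    have hneg : y ^ (-α) = (y ^ α)⁻¹ := Real.rpow_neg hy0.le α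
    have hden : y ^ α + β ≠ 0 := by positivity
    simp only [hf_def, hG_def, hneg]
    field_simp
    ring_nf
    try exact Or.inl trivial
  -- Step 2 : scaling y = c * x
  have hcα : c ^ α = β := by
    rw [hc_def, ← Real.rpow_mul hβ.le, one_div_mul_cancel hα0.ne', Real.rpow_one]
  have step2 : ∫ y in Ioi (0:ℝ), G y = c ^ 2 * ∫ x in Ioi (0:ℝ), H x := by
    have h := integral_comp_mul_left_Ioi G 0 hc0
    rw [mul_zero] at h
    have h2 : ∫ x in Ioi (0:ℝ), G (c * x) = c * ∫ x in Ioi (0:ℝ), H x := by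
      rw [← integral_const_mul]
      refine setIntegral_congr_fun measurableSet_Ioi fun x hx => ?_
      have hx0 : (0:ℝ) < x := hx
      have hmul : (c * x) ^ α = β * x ^ α := by
        rw [Real.mul_rpow hc0.le hx0.le, hcα]
      have hxa : (0:ℝ) < x ^ α := rpow_pos_of_pos hx0 α
      simp only [hG_def, hH_def, hmul]
      have hd1 : β * x ^ α + β ≠ 0 := by positivity
      have hd2 : x ^ α + 1 ≠ 0 := by positivity
      field_simp
    rw [h2, smul_eq_mul] at h
    have h4 : (∫ y in Ioi (0:ℝ), G y) = c * (c * ∫ x in Ioi (0:ℝ), H x) := by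
      field_simp at h
      linarith
    rw [h4]
    ring
  -- Step 3 : substitution x ↦ x ^ α
  have step3 : ∫ x in Ioi (0:ℝ), H x =
      (1 / α) * ((1 + a) * π / Real.sin (π * a)) := by
    set g : ℝ → ℝ := fun t => (1 / α) * (2 * (t ^ ((a + 1) - 1) * (1 + t) ^ (-((a + 1) + (1 - a)))) +
        t ^ (a - 1) * (1 + t) ^ (-(a + (2 - a)))) with hg_def
    have hsub := integral_comp_rpow_Ioi_of_pos (g := g) (p := α) hα0
    have hLHS : ∫ x in Ioi (0:ℝ), H x = ∫ x in Ioi (0:ℝ), (α * x ^ (α - 1)) • g (x ^ α) := by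
      refine setIntegral_congr_fun measurableSet_Ioi fun x hx => ?_
      have hx0 : (0:ℝ) < x := hx
      have hxa : (0:ℝ) < x ^ α := rpow_pos_of_pos hx0 α
      have hx1 : (0:ℝ) < 1 + x ^ α := by positivity
      have e0 : x ^ (α - 1) = x ^ α / x := by rw [Real.rpow_sub hx0, Real.rpow_one]
      have e1 : (x ^ α) ^ ((a + 1) - 1) = x ^ 2 := by
        rw [← Real.rpow_mul hx0.le,
          show α * ((a + 1) - 1) = ((2:ℕ):ℝ) from by push_cast; rw [ha_def]; field_simp; ring,
          Real.rpow_natCast]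
      have e2 : (x ^ α) ^ (a - 1) = x ^ 2 / x ^ α := by
        rw [← Real.rpow_mul hx0.le,
          show α * (a - 1) = (2:ℝ) - α from by rw [ha_def]; field_simp,
          Real.rpow_sub hx0,
          show x ^ (2:ℝ) = x ^ 2 from by rw [← Real.rpow_natCast x 2]; norm_num]
      have e3 : (1 + x ^ α) ^ (-((a + 1) + (1 - a))) = ((1 + x ^ α) ^ 2)⁻¹ := by
        rw [show -((a + 1) + (1 - a)) = -(2:ℝ) by ring, Real.rpow_neg hx1.le,
          show (1 + x ^ α) ^ (2:ℝ) = (1 + x ^ α) ^ 2 from by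
            rw [← Real.rpow_natCast _ 2]; norm_num]
      have e4 : (1 + x ^ α) ^ (-(a + (2 - a))) = ((1 + x ^ α) ^ 2)⁻¹ := by
        rw [show -(a + (2 - a)) = -(2:ℝ) by ring, Real.rpow_neg hx1.le,
          show (1 + x ^ α) ^ (2:ℝ) = (1 + x ^ α) ^ 2 from by
            rw [← Real.rpow_natCast _ 2]; norm_num]
      have hd2 : x ^ α + 1 ≠ 0 := by positivity
      simp only [hH_def, hg_def, smul_eq_mul, e0, e1, e2, e3, e4]
      field_simp
      ring
    rw [hLHS, hsub, hg_def]
    rw [integral_const_mul, key1 a ha0 ha1]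
  -- put everything together
  have hc2 : c ^ 2 = β ^ (2 / α) := by
    rw [hc_def, ← Real.rpow_natCast (β ^ (1/α)) 2, ← Real.rpow_mul hβ.le]
    norm_num
    try (congr 1; ring)
  calc ∫ x : EuclideanSpace ℝ (Fin 2), (1 - (1 / (1 + β * ‖x‖ ^ (-α))) ^ 2)
      = 2 * (π * ∫ y in Ioi (0:ℝ), y * f y) := step0
    _ = 2 * (π * (c ^ 2 * ((1 / α) * ((1 + a) * π / Real.sin (π * a))))) := by
        rw [step1, step2, step3]
    _ = 2 * (π ^ 2 * (α + 2) / (α ^ 2 * Real.sin (2 * π / α))) * β ^ (2 / α) := by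
        rw [hc2]
        have : π * a = 2 * π / α := by rw [ha_def]; ring
        rw [this, ha_def]
        field_simp
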